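/- Let A ⊆ ℝⁿ be a nonempty closed set, r > 0, and x a point with dist(x, A) = r at which the distance function δ_A(y) = dist(y, A) is differentiable. Then |∇δ_A(x)| = 1 and, setting T = {v : v • ∇δ_A(x) = 0}, the tangent cone of the level set S(A,r) = {z : dist(z,A) = r} at x satisfies Tan(S(A,r), x) ⊆ T. -/

import Mathlib

open Metric Set

/-- Tangent cone of a set `S` at a point `x`. -/
def tanCone {n : ℕ} (S : Set (EuclideanSpace ℝ (Fin n))) (x : EuclideanSpace ℝ (Fin n)) :
    Set (EuclideanSpace ℝ (Fin n)) :=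
  {v | ∀ ε > (0 : ℝ), ∃ y ∈ S, ∃ t : ℝ, 0 < t ∧ ‖y - x‖ < ε ∧ ‖t • (y - x) - v‖ < ε}

theorem stmt_9 {n : ℕ} (A : Set (EuclideanSpace ℝ (Fin n)))
    (hA : IsClosed A) (hne : A.Nonempty) (r : ℝ) (hr : 0 < r)
    (x : EuclideanSpace ℝ (Fin n)) (hx : Metric.infDist x A = r)
    (d' : EuclideanSpace ℝ (Fin n) →L[ℝ] ℝ)
    (hd : HasFDerivAt (fun y => Metric.infDist y A) d' x) :
    ‖d'‖ = 1 ∧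
      tanCone {z | Metric.infDist z A = r} x ⊆ {v | d' v = 0} := by
  have hle : ‖d'‖ ≤ 1 := by
    have := hd.le_of_lipschitz (lipschitz_infDist_pt A)
    simpa using this
  -- nearest point
  obtain ⟨a, haA, hax⟩ := hA.exists_infDist_eq_dist hne x
  have hra : dist x a = r := by rw [← hx, hax]
  have hxa : ‖x - a‖ = r := by rw [← dist_eq_norm]; exact hra
  set u : EuclideanSpace ℝ (Fin n) := r⁻¹ • (a - x) with hu
  have hun : ‖u‖ = 1 := by
    rw [hu, norm_smul, norm_inv, Real.norm_of_nonneg hr.le, norm_sub_rev, hxa]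
    field_simp
  -- δ(x + t • u) = r - t for 0 ≤ t ≤ r
  have key : ∀ t : ℝ, 0 ≤ t → t ≤ r → Metric.infDist (x + t • u) A = r - t := by
    intro t ht htr
    have hdista : dist (x + t • u) a = r - t := by
      rw [dist_eq_norm]
      have hxe : x + t • u - a = (1 - t / r) • (x - a) := by
        have h0 : (r:ℝ) ≠ 0 := hr.ne'
        rw [hu]
        match_scalars <;> field_simp <;> ring
      rw [hxe, norm_smul, hxa, Real.norm_of_nonneg]
      · field_simp
      · have : t / r ≤ 1 := by rw [div_le_one hr]; exact htr
        linarith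
    have hup : Metric.infDist (x + t • u) A ≤ r - t :=
      hdista ▸ infDist_le_dist_of_mem haA
    have hlo : r - t ≤ Metric.infDist (x + t • u) A := by
      have h1 : Metric.infDist x A ≤ Metric.infDist (x + t • u) A + dist x (x + t • u) :=
        infDist_le_infDist_add_dist
      have h2 : dist x (x + t • u) = t := by
        rw [dist_eq_norm]
        have h3 : x - (x + t • u) = -(t • u) := by abel
        rw [h3, norm_neg, norm_smul, hun, Real.norm_of_nonneg ht, mul_one]
      rw [hx, h2] at h1; linarith
    linarith
  -- derivative along u at 0 equals d' u, which is -1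
  have hline : HasDerivAt (fun t : ℝ => x + t • u) u 0 := by
    simpa using ((hasDerivAt_id (0:ℝ)).smul_const u).const_add x
  have hcomp : HasDerivAt (fun t : ℝ => Metric.infDist (x + t • u) A) (d' u) 0 := by
    have hd0 : HasFDerivAt (fun y => Metric.infDist y A) d' (x + (0:ℝ) • u) := by
      simpa using hd
    exact hd0.comp_hasDerivAt (0:ℝ) hline
  have hmem : (0:ℝ) ∈ Icc (0:ℝ) r := ⟨le_rfl, hr.le⟩
  have hcompW : HasDerivWithinAt (fun t : ℝ => Metric.infDist (x + t • u) A) (d' u)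
      (Icc 0 r) 0 := hcomp.hasDerivWithinAt
  have haff : HasDerivWithinAt (fun t : ℝ => r - t) (-1 : ℝ) (Icc 0 r) 0 := by
    simpa using (((hasDerivAt_id (0:ℝ)).const_sub r).hasDerivWithinAt (s := Icc 0 r))
  have heq : HasDerivWithinAt (fun t : ℝ => Metric.infDist (x + t • u) A) (-1 : ℝ)
      (Icc 0 r) 0 :=
    haff.congr (fun t ht => key t ht.1 ht.2) (by simpa using key 0 le_rfl hr.le)
  have hdu : d' u = -1 :=
    (uniqueDiffOn_Icc hr 0 hmem).eq_deriv _ hcompW heq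
  have hge : (1:ℝ) ≤ ‖d'‖ := by
    have h := d'.le_opNorm u
    rw [hun, mul_one] at h
    calc (1:ℝ) = ‖d' u‖ := by rw [hdu]; simp
      _ ≤ ‖d'‖ := h
  refine ⟨le_antisymm hle hge, ?_⟩
  intro v hv
  have hab : ∀ η : ℝ, 0 < η → |d' v| ≤ η := by
    intro η hη
    set c : ℝ := η / (2 * (‖v‖ + 1)) with hc
    have hcpos : 0 < c := by positivity
    have hlo2 := hd.isLittleO.def hcpos
    rw [Metric.eventually_nhds_iff] at hlo2
    obtain ⟨δ, hδpos, hδ⟩ := hlo2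
    set ε₀ : ℝ := min δ (min 1 (η/2)) with hε₀
    have hε₀pos : 0 < ε₀ := by
      apply lt_min hδpos (lt_min one_pos (by linarith))
    obtain ⟨y, hyS, t, htpos, hyx, htv⟩ := hv ε₀ hε₀pos
    have hfy : Metric.infDist y A = r := hyS
    have hder : ‖Metric.infDist y A - Metric.infDist x A - d' (y - x)‖ ≤ c * ‖y - x‖ := by
      have : dist y x < δ := by
        rw [dist_eq_norm]; exact hyx.trans_le (min_le_left _ _)
      simpa using hδ this
    have hdyx : |d' (y - x)| ≤ c * ‖y - x‖ := by
      rw [hfy, hx] at hder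
      simpa [abs_sub_comm] using hder
    have h1 : |d' v| ≤ |d' (v - t • (y - x))| + |d' (t • (y - x))| := by
      have : d' v = d' (v - t • (y - x)) + d' (t • (y - x)) := by
        rw [← map_add]; congr 1; abel
      rw [this]; exact abs_add_le _ _
    have h2 : |d' (v - t • (y - x))| ≤ ε₀ := by
      calc |d' (v - t • (y - x))| ≤ ‖d'‖ * ‖v - t • (y - x)‖ := d'.le_opNorm _
        _ ≤ 1 * ε₀ := by
            apply mul_le_mul hle ?_ (norm_nonneg _) zero_le_one
            rw [norm_sub_rev]; exact htv.le
        _ = ε₀ := one_mul _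
    have h3 : |d' (t • (y - x))| ≤ c * (‖v‖ + ε₀) := by
      have : d' (t • (y - x)) = t * d' (y - x) := by simp
      rw [this, abs_mul, abs_of_pos htpos]
      calc t * |d' (y - x)| ≤ t * (c * ‖y - x‖) := by
            exact mul_le_mul_of_nonneg_left hdyx htpos.le
        _ = c * ‖t • (y - x)‖ := by
            rw [norm_smul, Real.norm_of_nonneg htpos.le]; ring
        _ ≤ c * (‖v‖ + ε₀) := by
            apply mul_le_mul_of_nonneg_left _ hcpos.le
            calc ‖t • (y - x)‖ ≤ ‖v‖ + ‖t • (y - x) - v‖ := by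
                  have := norm_sub_norm_le (t • (y - x)) v
                  linarith [abs_le.mp (abs_norm_sub_norm_le (t • (y - x)) v)]
              _ ≤ ‖v‖ + ε₀ := by linarith [htv.le]
    have h4 : c * (‖v‖ + ε₀) ≤ η / 2 := by
      have hε₀1 : ε₀ ≤ 1 := (min_le_right _ _).trans (min_le_left _ _)
      have : c * (‖v‖ + ε₀) ≤ c * (‖v‖ + 1) :=
        mul_le_mul_of_nonneg_left (by linarith) hcpos.le
      have hcv : c * (‖v‖ + 1) = η / 2 := by
        rw [hc]; field_simp
      linarith
    have hε₀η : ε₀ ≤ η / 2 := (min_le_right _ _).trans (min_le_right _ _)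
    linarith
  have h0 : |d' v| ≤ 0 := le_of_forall_pos_le_add (by intro ε hε; simpa using hab ε hε)
  exact abs_nonpos_iff.mp h0
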